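/- Suppose for each pair 1 ≤ a < b ≤ n we are given ℚ-linear maps D_{ab} : E_n → E_n and N_{ab} : E_n → E_n (with D_{ba} := −D_{ab}, N_{ba} := −N_{ab}) such that: D_{ab}(1) = N_{ab}(1) = 0; on generators, D_{ab}(x_{ij}) = N_{ab}(x_{ij}) = 1, −1, or 0 according as (i,j) = (a,b), (i,j) = (b,a), or neither; D_{ab}(PQ) = D_{ab}(P)·Q + σ_{ab}(P)·D_{ab}(Q) for all P, Q ∈ E_n; and for all products of generators P and Q, N_{ab}(PQ) = P·N_{ab}(Q) + N_{σ_Q(a)σ_Q(b)}(P)·Q, where σ_Q ∈ S_n is the product of the transpositions (i_1 j_1)···(i_d j_d) when Q = x_{i_1 j_1}···x_{i_d j_d}. For a product of generators P = x_{i_1 j_1}···x_{i_d j_d}, set Δ_P := D_{i_1 j_1}∘···∘D_{i_d j_d} and ∇_P := N_{i_d j_d}∘···∘N_{i_1 j_1}. Then for any two products of generators P and Q of the same length, Δ_P(Q) = Δ_Q(P) = ∇_Q(P) = ∇_P(Q), and this common value is a scalar multiple of 1 ∈ E_n. -/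

import Mathlib

open scoped TensorProduct

namespace FK

/-- Defining relations of the Fomin–Kirillov algebra `E n`, with generators indexed by
ordered pairs `(i, j)`; we also impose `x_{ii} = 0` and the antisymmetry `x_{ji} = -x_{ij}`,
so that the generators of the algebra are the `x_{ij}` for `i < j`. -/
inductive Rel (n : ℕ) : FreeAlgebra ℚ (Fin n × Fin n) → FreeAlgebra ℚ (Fin n × Fin n) → Prop
  | diag (i : Fin n) : Rel n (FreeAlgebra.ι ℚ (i, i)) 0
  | antisymm (i j : Fin n) (hij : i ≠ j) :
      Rel n (FreeAlgebra.ι ℚ (j, i)) (-FreeAlgebra.ι ℚ (i, j))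
  | square (i j : Fin n) (hij : i ≠ j) :
      Rel n (FreeAlgebra.ι ℚ (i, j) * FreeAlgebra.ι ℚ (i, j)) 0
  | comm (i j k l : Fin n) (h : List.Nodup [i, j, k, l]) :
      Rel n (FreeAlgebra.ι ℚ (i, j) * FreeAlgebra.ι ℚ (k, l))
        (FreeAlgebra.ι ℚ (k, l) * FreeAlgebra.ι ℚ (i, j))
  | cyclic (i j k : Fin n) (h : List.Nodup [i, j, k]) :
      Rel n (FreeAlgebra.ι ℚ (i, j) * FreeAlgebra.ι ℚ (j, k)
        + FreeAlgebra.ι ℚ (j, k) * FreeAlgebra.ι ℚ (k, i)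
        + FreeAlgebra.ι ℚ (k, i) * FreeAlgebra.ι ℚ (i, j)) 0

/-- The Fomin–Kirillov algebra `E n`. -/
abbrev E (n : ℕ) : Type := RingQuot (Rel n)

/-- The generator `x_{ij}` of `E n`. -/
noncomputable def x (n : ℕ) (i j : Fin n) : E n :=
  RingQuot.mkAlgHom ℚ (Rel n) (FreeAlgebra.ι ℚ (i, j))

/-- The product of generators `x_{i₁j₁} ⋯ x_{i_d j_d}` given by a list of pairs. -/
noncomputable def word (n : ℕ) (l : List (Fin n × Fin n)) : E n :=
  (l.map fun p => x n p.1 p.2).prod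

/-- The degree-`d` component of `E n`: the span of products of `d` generators. -/
def degSpan (n : ℕ) (d : ℕ) : Submodule ℚ (E n) :=
  Submodule.span ℚ {y | ∃ l : List (Fin n × Fin n),
    (∀ p ∈ l, p.1 ≠ p.2) ∧ l.length = d ∧ y = word n l}

/-- The Fomin–Kirillov algebra of a graph `G`: the subalgebra of `E n` generated by the
`x_{ij}` with `{i,j}` an edge of `G`. -/
def EG (n : ℕ) (G : SimpleGraph (Fin n)) : Subalgebra ℚ (E n) :=
  Algebra.adjoin ℚ {y | ∃ i j : Fin n, G.Adj i j ∧ y = x n i j}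

/-- The degree-`d` component `E_G^d = E_G ∩ E_n^d`. -/
def EGdeg (n : ℕ) (G : SimpleGraph (Fin n)) (d : ℕ) : Submodule ℚ (E n) :=
  (EG n G).toSubmodule ⊓ degSpan n d

/-- The positive-degree part `E_G⁺` of `E_G`. -/
def EGplus (n : ℕ) (G : SimpleGraph (Fin n)) : Submodule ℚ (E n) :=
  ⨆ d : ℕ, ⨆ _ : 1 ≤ d, EGdeg n G d


/-- The permutation `σ_Q = (i₁ j₁)⋯(i_d j_d)` associated to a product of generators
`Q = x_{i₁j₁}⋯x_{i_d j_d}`. -/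
def lperm (n : ℕ) (l : List (Fin n × Fin n)) : Equiv.Perm (Fin n) :=
  (l.map fun p => Equiv.swap p.1 p.2).prod

/-- The composite operator `F_{p₁} ∘ F_{p₂} ∘ ⋯ ∘ F_{p_d}` attached to a list of pairs
`[p₁, …, p_d]` (composition in the displayed order, leftmost applied last to the input... 
i.e. `F_{p₁}` is the outermost map). -/
def opComp (n : ℕ) (F : Fin n → Fin n → Module.End ℚ (E n))
    (l : List (Fin n × Fin n)) : Module.End ℚ (E n) :=
  (l.map fun p => F p.1 p.2).prod


variable {n : ℕ}

/-- The generator attached to a pair. -/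
noncomputable def xp (n : ℕ) (p : Fin n × Fin n) : E n := x n p.1 p.2

/-- Entrywise action of a permutation on a pair. -/
def pact (f : Equiv.Perm (Fin n)) (p : Fin n × Fin n) : Fin n × Fin n := (f p.1, f p.2)

/-- The basic pairing between two pairs. -/
def eps (p q : Fin n × Fin n) : ℚ :=
  if q = p then 1 else if q = Prod.swap p then -1 else 0

@[simp] lemma pact_one (p : Fin n × Fin n) : pact (1 : Equiv.Perm (Fin n)) p = p := rfl

lemma pact_mul (f g : Equiv.Perm (Fin n)) (p : Fin n × Fin n) :
    pact (f * g) p = pact f (pact g p) := rfl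

lemma pact_ne {f : Equiv.Perm (Fin n)} {p : Fin n × Fin n} (h : p.1 ≠ p.2) :
    (pact f p).1 ≠ (pact f p).2 := fun h' => h (f.injective h')

lemma pact_inj {f : Equiv.Perm (Fin n)} {p q : Fin n × Fin n} (h : pact f p = pact f q) :
    p = q := by
  unfold pact at h
  rw [Prod.ext_iff] at h ⊢
  exact ⟨f.injective h.1, f.injective h.2⟩

lemma pact_swap (f : Equiv.Perm (Fin n)) (p : Fin n × Fin n) :
    pact f (Prod.swap p) = Prod.swap (pact f p) := rfl

lemma eps_pact (f : Equiv.Perm (Fin n)) (p q : Fin n × Fin n) :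
    eps (pact f p) (pact f q) = eps p q := by
  have h1 : (pact f q = pact f p) ↔ q = p := ⟨pact_inj, fun h => by rw [h]⟩
  have h2 : (pact f q = Prod.swap (pact f p)) ↔ q = Prod.swap p := by
    rw [← pact_swap]
    exact ⟨pact_inj, fun h => by rw [h]⟩
  simp only [eps, h1, h2]

lemma eps_comm (p q : Fin n × Fin n) : eps p q = eps q p := by
  have e1 : (q = p) ↔ (p = q) := eq_comm
  have e2 : (q = Prod.swap p) ↔ (p = Prod.swap q) := by
    constructor <;> (intro h; simp [h])
  simp only [eps, e1, e2]

lemma eps_ne_zero_swap {p q : Fin n × Fin n} (h : eps p q ≠ 0) :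
    Equiv.swap q.1 q.2 = Equiv.swap p.1 p.2 := by
  unfold eps at h
  split_ifs at h with h1 h2
  · rw [h1]
  · rw [h2]; exact Equiv.swap_comm p.2 p.1
  · exact absurd rfl h

lemma word_nil : word n [] = 1 := rfl

lemma word_cons (p : Fin n × Fin n) (l : List (Fin n × Fin n)) :
    word n (p :: l) = xp n p * word n l := by
  simp [word, xp]

@[simp] lemma lperm_nil : lperm n [] = 1 := rfl

lemma lperm_cons (p : Fin n × Fin n) (l : List (Fin n × Fin n)) :
    lperm n (p :: l) = Equiv.swap p.1 p.2 * lperm n l := by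
  simp [lperm]

lemma lperm_append (l l' : List (Fin n × Fin n)) :
    lperm n (l ++ l') = lperm n l * lperm n l' := by
  simp [lperm]

lemma opComp_nil (F : Fin n → Fin n → Module.End ℚ (E n)) (y : E n) :
    opComp n F [] y = y := rfl

lemma opComp_cons (F : Fin n → Fin n → Module.End ℚ (E n)) (p : Fin n × Fin n)
    (l : List (Fin n × Fin n)) (y : E n) :
    opComp n F (p :: l) y = F p.1 p.2 (opComp n F l y) := by
  simp [opComp, List.prod_cons, Module.End.mul_apply]

lemma opComp_append (F : Fin n → Fin n → Module.End ℚ (E n)) (l l' : List (Fin n × Fin n))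
    (y : E n) :
    opComp n F (l ++ l') y = opComp n F l (opComp n F l' y) := by
  simp [opComp, List.prod_append, Module.End.mul_apply]

/-- Coefficient appearing in both expansion formulas. -/
def coef (lP : List (Fin n × Fin n)) (q : Fin n × Fin n) (t : ℕ) : ℚ :=
  eps (lP.getD t q) (pact (lperm n (lP.drop (t+1))) q)

lemma coef_zero (p : Fin n × Fin n) (l : List (Fin n × Fin n)) (q : Fin n × Fin n) :
    coef (p :: l) q 0 = eps p (pact (lperm n l) q) := by
  simp [coef]

lemma coef_succ (p : Fin n × Fin n) (l : List (Fin n × Fin n)) (q : Fin n × Fin n) (t : ℕ) :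
    coef (p :: l) q (t+1) = coef l q t := by
  simp [coef]

/-- Bundled data for the main argument. -/
structure Setup (n : ℕ) where
  σ : Fin n → Fin n → (E n →ₐ[ℚ] E n)
  D : Fin n → Fin n → Module.End ℚ (E n)
  N : Fin n → Fin n → Module.End ℚ (E n)
  hσ : ∀ a b i j : Fin n, σ a b (x n i j) = x n (Equiv.swap a b i) (Equiv.swap a b j)
  hD1 : ∀ a b : Fin n, a ≠ b → D a b 1 = 0
  hN1 : ∀ a b : Fin n, a ≠ b → N a b 1 = 0
  hDgen : ∀ a b i j : Fin n, a ≠ b → i ≠ j →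
    D a b (x n i j) = if i = a ∧ j = b then 1 else if i = b ∧ j = a then -1 else 0
  hNgen : ∀ a b i j : Fin n, a ≠ b → i ≠ j →
    N a b (x n i j) = if i = a ∧ j = b then 1 else if i = b ∧ j = a then -1 else 0
  hDLeib : ∀ a b : Fin n, a ≠ b → ∀ P Q : E n,
    D a b (P * Q) = D a b P * Q + σ a b P * D a b Q
  hNLeib : ∀ a b : Fin n, a ≠ b → ∀ lP lQ : List (Fin n × Fin n),
    (∀ p ∈ lP, p.1 ≠ p.2) → (∀ p ∈ lQ, p.1 ≠ p.2) →
    N a b (word n lP * word n lQ) =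
      word n lP * N a b (word n lQ) +
      N (lperm n lQ a) (lperm n lQ b) (word n lP) * word n lQ

namespace Setup

variable {n : ℕ} (S : Setup n)

lemma Dx {p q : Fin n × Fin n} (hp : p.1 ≠ p.2) (hq : q.1 ≠ q.2) :
    S.D p.1 p.2 (xp n q) = eps p q • (1 : E n) := by
  rw [xp, S.hDgen p.1 p.2 q.1 q.2 hp hq]
  have h1 : (q.1 = p.1 ∧ q.2 = p.2) ↔ q = p := (Prod.ext_iff).symm
  have h2 : (q.1 = p.2 ∧ q.2 = p.1) ↔ q = Prod.swap p := by
    rw [Prod.ext_iff]; exact Iff.rfl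
  simp only [eps, h1, h2]
  split_ifs <;> simp [Algebra.smul_def]

lemma Nx {p q : Fin n × Fin n} (hp : p.1 ≠ p.2) (hq : q.1 ≠ q.2) :
    S.N p.1 p.2 (xp n q) = eps p q • (1 : E n) := by
  rw [xp, S.hNgen p.1 p.2 q.1 q.2 hp hq]
  have h1 : (q.1 = p.1 ∧ q.2 = p.2) ↔ q = p := (Prod.ext_iff).symm
  have h2 : (q.1 = p.2 ∧ q.2 = p.1) ↔ q = Prod.swap p := by
    rw [Prod.ext_iff]; exact Iff.rfl
  simp only [eps, h1, h2]
  split_ifs <;> simp [Algebra.smul_def]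

lemma Dxmul {p q : Fin n × Fin n} (hp : p.1 ≠ p.2) (hq : q.1 ≠ q.2) (Z : E n) :
    S.D p.1 p.2 (xp n q * Z) =
      eps p q • Z + xp n (pact (Equiv.swap p.1 p.2) q) * S.D p.1 p.2 Z := by
  rw [S.hDLeib p.1 p.2 hp (xp n q) Z, S.Dx hp hq, smul_mul_assoc, one_mul]
  congr 2
  rw [xp, S.hσ]
  rfl

lemma Nxmul {q : Fin n × Fin n} (hq : q.1 ≠ q.2) {p : Fin n × Fin n} (hp : p.1 ≠ p.2)
    {l : List (Fin n × Fin n)} (hl : ∀ r ∈ l, r.1 ≠ r.2) :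
    S.N q.1 q.2 (xp n p * word n l) =
      xp n p * S.N q.1 q.2 (word n l) + eps p (pact (lperm n l) q) • word n l := by
  have h := S.hNLeib q.1 q.2 hq [p] l (by simpa using hp) hl
  have hw : word n [p] = xp n p := by
    rw [word_cons, word_nil, mul_one]
  rw [hw] at h
  rw [h]
  congr 1
  have hne : (pact (lperm n l) q).1 ≠ (pact (lperm n l) q).2 := pact_ne hq
  have hx := S.Nx (p := pact (lperm n l) q) (q := p) hne hp
  have e1 : lperm n l q.1 = (pact (lperm n l) q).1 := rfl
  have e2 : lperm n l q.2 = (pact (lperm n l) q).2 := rfl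
  rw [e1, e2, hx, smul_mul_assoc, one_mul, eps_comm]

end Setup
namespace Setup

variable {n : ℕ} (S : Setup n)

lemma dexp : ∀ (lP : List (Fin n × Fin n)), (∀ p ∈ lP, p.1 ≠ p.2) →
    ∀ (q : Fin n × Fin n), q.1 ≠ q.2 → ∀ Z : E n,
    opComp n S.D lP (xp n q * Z) =
      xp n (pact (lperm n lP) q) * opComp n S.D lP Z +
      ∑ t ∈ Finset.range lP.length, coef lP q t • opComp n S.D (lP.eraseIdx t) Z := by
  intro lP
  induction lP with
  | nil =>
    intro _ q hq Z
    simp [opComp_nil]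
  | cons p l IH =>
    intro hP q hq Z
    have hp : p.1 ≠ p.2 := hP p (by simp)
    have hl : ∀ r ∈ l, r.1 ≠ r.2 := fun r hr => hP r (by simp [hr])
    calc opComp n S.D (p :: l) (xp n q * Z)
        = S.D p.1 p.2 (xp n (pact (lperm n l) q) * opComp n S.D l Z) +
          ∑ t ∈ Finset.range l.length,
            coef l q t • S.D p.1 p.2 (opComp n S.D (l.eraseIdx t) Z) := by
          rw [opComp_cons, IH hl q hq Z, map_add, map_sum]
          simp only [map_smul]
      _ = (eps p (pact (lperm n l) q) • opComp n S.D l Z +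
            xp n (pact (lperm n (p :: l)) q) * opComp n S.D (p :: l) Z) +
          ∑ t ∈ Finset.range l.length,
            coef l q t • opComp n S.D (p :: l.eraseIdx t) Z := by
          rw [S.Dxmul hp (pact_ne hq) (opComp n S.D l Z), lperm_cons, pact_mul,
            opComp_cons S.D p l Z]
          exact congrArg _ (Finset.sum_congr rfl fun t _ => by rw [opComp_cons])
      _ = xp n (pact (lperm n (p :: l)) q) * opComp n S.D (p :: l) Z +
          ∑ t ∈ Finset.range (p :: l).length, coef (p :: l) q t • opComp n S.D ((p :: l).eraseIdx t) Z := by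
          rw [List.length_cons, Finset.sum_range_succ']
          simp only [coef_succ, coef_zero, List.eraseIdx_cons_succ, List.eraseIdx_cons_zero]
          abel

lemma nexp : ∀ (lP : List (Fin n × Fin n)), (∀ p ∈ lP, p.1 ≠ p.2) →
    ∀ (q : Fin n × Fin n), q.1 ≠ q.2 →
    S.N q.1 q.2 (word n lP) =
      ∑ t ∈ Finset.range lP.length, coef lP q t • word n (lP.eraseIdx t) := by
  intro lP
  induction lP with
  | nil =>
    intro _ q hq
    simp [word_nil, S.hN1 q.1 q.2 hq]
  | cons p l IH =>
    intro hP q hq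
    have hp : p.1 ≠ p.2 := hP p (by simp)
    have hl : ∀ r ∈ l, r.1 ≠ r.2 := fun r hr => hP r (by simp [hr])
    rw [word_cons, S.Nxmul hq hp hl, IH hl q hq, Finset.mul_sum,
      List.length_cons, Finset.sum_range_succ']
    simp only [coef_succ, coef_zero, List.eraseIdx_cons_succ, List.eraseIdx_cons_zero,
      word_cons, mul_smul_comm]

lemma zone : ∀ (lP : List (Fin n × Fin n)), lP ≠ [] → (∀ p ∈ lP, p.1 ≠ p.2) →
    opComp n S.D lP (1 : E n) = 0 := by
  intro lP
  induction lP with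
  | nil => intro h; exact absurd rfl h
  | cons p l IH =>
    intro _ hP
    rw [opComp_cons]
    cases l with
    | nil => rw [opComp_nil]; exact S.hD1 p.1 p.2 (hP p (by simp))
    | cons r l' =>
      rw [IH (by simp) (fun s hs => hP s (by simp [hs]))]
      exact map_zero _

lemma star {lP lQ : List (Fin n × Fin n)} {q : Fin n × Fin n}
    (hP : ∀ p ∈ lP, p.1 ≠ p.2) (hq : q.1 ≠ q.2) (hQ : ∀ p ∈ lQ, p.1 ≠ p.2)
    (h0 : opComp n S.D lP (word n lQ) = 0) :
    opComp n S.D lP (word n (q :: lQ)) =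
      ∑ t ∈ Finset.range lP.length, coef lP q t • opComp n S.D (lP.eraseIdx t) (word n lQ) := by
  rw [word_cons, S.dexp lP hP q hq (word n lQ), h0, mul_zero, zero_add]

end Setup
namespace Setup

variable {n : ℕ}

theorem main (S : Setup n) : ∀ d : ℕ, ∀ lP lQ : List (Fin n × Fin n),
    (∀ p ∈ lP, p.1 ≠ p.2) → (∀ p ∈ lQ, p.1 ≠ p.2) → lQ.length = d →
    ((d < lP.length → opComp n S.D lP (word n lQ) = 0) ∧
     (lP.length = d →
       (opComp n S.D lP (word n lQ) = opComp n S.N lQ.reverse (word n lP) ∧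
        opComp n S.D lP (word n lQ) = opComp n S.D lQ (word n lP) ∧
        (lperm n lP * lperm n lQ ≠ 1 → opComp n S.D lP (word n lQ) = 0) ∧
        opComp n S.D lP (word n lQ) ∈ Submodule.span ℚ ({1} : Set (E n))))) := by
  intro d
  induction d using Nat.strong_induction_on with
  | _ d IH =>
  intro lP lQ hP hQ hlen
  cases lQ with
  | nil =>
    subst hlen
    constructor
    · intro hlp
      exact S.zone lP (by intro h; rw [h] at hlp; simp at hlp) hP
    · intro hlp
      have hnil : lP = [] := List.length_eq_zero_iff.mp (by simpa using hlp)
      subst hnil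
      refine ⟨rfl, rfl, fun h => absurd (by simp) h, ?_⟩
      have : opComp n S.D [] (word n ([] : List (Fin n × Fin n))) = 1 := rfl
      rw [this]
      exact Submodule.mem_span_singleton_self 1
  | cons q lQ' =>
    have hq : q.1 ≠ q.2 := hQ q (by simp)
    have hQ' : ∀ p ∈ lQ', p.1 ≠ p.2 := fun p hp => hQ p (by simp [hp])
    subst hlen
    have IHe := IH lQ'.length (by simp)
    constructor
    -- PART (a) : more operators than letters
    · intro hlp
      have hlp' : lQ'.length + 1 < lP.length := by simpa using hlp
      have h0 : opComp n S.D lP (word n lQ') = 0 :=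
        (IHe lP lQ' hP hQ' rfl).1 (by omega)
      rw [S.star hP hq hQ' h0]
      apply Finset.sum_eq_zero
      intro t ht
      have ht' : t < lP.length := Finset.mem_range.mp ht
      have hlen' : (lP.eraseIdx t).length = lP.length - 1 := by
        rw [List.length_eraseIdx, if_pos ht']
      have hsub : ∀ p ∈ lP.eraseIdx t, p.1 ≠ p.2 :=
        fun p hp => hP p (List.eraseIdx_subset hp)
      rw [(IHe (lP.eraseIdx t) lQ' hsub hQ' rfl).1 (by omega), smul_zero]
    -- PART (b) : equal lengths
    · intro hlp
      have hlp' : lP.length = lQ'.length + 1 := by simpa using hlp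
      have h0 : opComp n S.D lP (word n lQ') = 0 :=
        (IHe lP lQ' hP hQ' rfl).1 (by omega)
      have KP := S.star hP hq hQ' h0
      have herase : ∀ t, t < lP.length → (lP.eraseIdx t).length = lQ'.length := by
        intro t ht
        rw [List.length_eraseIdx, if_pos ht]
        omega
      have hsub : ∀ t, ∀ p ∈ lP.eraseIdx t, p.1 ≠ p.2 :=
        fun t p hp => hP p (List.eraseIdx_subset hp)
      refine ⟨?_, ?_, ?_, ?_⟩
      -- (i) cross identity
      · have hrev : (q :: lQ').reverse = lQ'.reverse ++ [q] := by simp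
        rw [KP, hrev, opComp_append]
        have hone : opComp n S.N [q] (word n lP) = S.N q.1 q.2 (word n lP) := by
          rw [opComp_cons, opComp_nil]
        rw [hone, S.nexp lP hP q hq, map_sum]
        refine Finset.sum_congr rfl fun t ht => ?_
        have ht' := Finset.mem_range.mp ht
        rw [map_smul]
        congr 1
        exact ((IHe (lP.eraseIdx t) lQ' (hsub t) hQ' rfl).2 (herase t ht')).1
      -- (ii) symmetry
      · cases lP with
        | nil => simp at hlp'
        | cons p lP' =>
          have hp : p.1 ≠ p.2 := hP p (by simp)
          have hP' : ∀ r ∈ lP', r.1 ≠ r.2 := fun r hr => hP r (by simp [hr])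
          have hlenP' : lP'.length = lQ'.length := by simpa using hlp'
          have h0' : opComp n S.D (q :: lQ') (word n lP') = 0 :=
            (IH lP'.length (by omega) (q :: lQ') lP' hQ hP' rfl).1 (by simp; omega)
          have KQ := S.star hQ hp hP' h0'
          -- inner expansions
          have inner1 : ∀ u ∈ Finset.range lP'.length,
              opComp n S.D (p :: lP'.eraseIdx u) (word n lQ') =
              ∑ s ∈ Finset.range lQ'.length,
                coef lQ' p s • opComp n S.D (lP'.eraseIdx u) (word n (lQ'.eraseIdx s)) := by
            intro u hu
            have hu' := Finset.mem_range.mp hu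
            have hsubu : ∀ r ∈ lP'.eraseIdx u, r.1 ≠ r.2 :=
              fun r hr => hP' r (List.eraseIdx_subset hr)
            have hPu : ∀ r ∈ p :: lP'.eraseIdx u, r.1 ≠ r.2 := by
              intro r hr
              rcases List.mem_cons.mp hr with h | h
              · rw [h]; exact hp
              · exact hsubu r h
            have hlenu : (lP'.eraseIdx u).length = lP'.length - 1 := by
              rw [List.length_eraseIdx, if_pos hu']
            have hlen1 : (p :: lP'.eraseIdx u).length = lQ'.length := by
              simp only [List.length_cons, hlenu]; omega
            have s1 := ((IH lQ'.length (by omega) (p :: lP'.eraseIdx u) lQ' hPu hQ' rfl).2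
              hlen1).2.1
            have h0u : opComp n S.D lQ' (word n (lP'.eraseIdx u)) = 0 :=
              (IH (lP'.eraseIdx u).length (by omega) lQ' (lP'.eraseIdx u) hQ' hsubu rfl).1
                (by omega)
            have s2 := S.star hQ' hp hsubu h0u
            rw [s1, s2]
            refine Finset.sum_congr rfl fun s hs => ?_
            have hs' := Finset.mem_range.mp hs
            congr 1
            have hsubs : ∀ r ∈ lQ'.eraseIdx s, r.1 ≠ r.2 :=
              fun r hr => hQ' r (List.eraseIdx_subset hr)
            have hlens : (lQ'.eraseIdx s).length = lQ'.length - 1 := by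
              rw [List.length_eraseIdx, if_pos hs']
            exact ((IH (lP'.eraseIdx u).length (by omega) (lQ'.eraseIdx s) (lP'.eraseIdx u)
              hsubs hsubu rfl).2 (by omega)).2.1
          have inner2 : ∀ s ∈ Finset.range lQ'.length,
              opComp n S.D (q :: lQ'.eraseIdx s) (word n lP') =
              ∑ u ∈ Finset.range lP'.length,
                coef lP' q u • opComp n S.D (lP'.eraseIdx u) (word n (lQ'.eraseIdx s)) := by
            intro s hs
            have hs' := Finset.mem_range.mp hs
            have hsubs : ∀ r ∈ lQ'.eraseIdx s, r.1 ≠ r.2 :=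
              fun r hr => hQ' r (List.eraseIdx_subset hr)
            have hQs : ∀ r ∈ q :: lQ'.eraseIdx s, r.1 ≠ r.2 := by
              intro r hr
              rcases List.mem_cons.mp hr with h | h
              · rw [h]; exact hq
              · exact hsubs r h
            have hlens : (lQ'.eraseIdx s).length = lQ'.length - 1 := by
              rw [List.length_eraseIdx, if_pos hs']
            have hlen1 : (q :: lQ'.eraseIdx s).length = lP'.length := by
              simp only [List.length_cons, hlens]; omega
            have s1 := ((IH lP'.length (by omega) (q :: lQ'.eraseIdx s) lP' hQs hP' rfl).2
              hlen1).2.1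
            have h0s : opComp n S.D lP' (word n (lQ'.eraseIdx s)) = 0 :=
              (IH (lQ'.eraseIdx s).length (by omega) lP' (lQ'.eraseIdx s) hP' hsubs rfl).1
                (by omega)
            have s2 := S.star hP' hq hsubs h0s
            rw [s1, s2, hlenP']
          -- assemble
          rw [KP, KQ]
          rw [show (p :: lP').length = lP'.length + 1 from rfl,
            show (q :: lQ').length = lQ'.length + 1 from rfl,
            Finset.sum_range_succ', Finset.sum_range_succ']
          simp only [coef_succ, coef_zero, List.eraseIdx_cons_succ, List.eraseIdx_cons_zero]
          have L1 : ∑ u ∈ Finset.range lP'.length,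
              coef lP' q u • opComp n S.D (p :: lP'.eraseIdx u) (word n lQ') =
              ∑ u ∈ Finset.range lP'.length, ∑ s ∈ Finset.range lQ'.length,
                (coef lP' q u * coef lQ' p s) •
                  opComp n S.D (lP'.eraseIdx u) (word n (lQ'.eraseIdx s)) := by
            refine Finset.sum_congr rfl fun u hu => ?_
            rw [inner1 u hu, Finset.smul_sum]
            exact Finset.sum_congr rfl fun s _ => by rw [smul_smul]
          have L2 : ∑ s ∈ Finset.range lQ'.length,
              coef lQ' p s • opComp n S.D (q :: lQ'.eraseIdx s) (word n lP') =
              ∑ u ∈ Finset.range lP'.length, ∑ s ∈ Finset.range lQ'.length,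
                (coef lP' q u * coef lQ' p s) •
                  opComp n S.D (lP'.eraseIdx u) (word n (lQ'.eraseIdx s)) := by
            rw [Finset.sum_comm]
            refine Finset.sum_congr rfl fun s hs => ?_
            rw [inner2 s hs, Finset.smul_sum]
            exact Finset.sum_congr rfl fun u _ => by rw [smul_smul, mul_comm]
          rw [L1, L2]
          congr 1
          -- boundary terms
          have hsym := ((IHe lP' lQ' hP' hQ' rfl).2 hlenP').2.1
          rw [← hsym]
          rcases eq_or_ne (opComp n S.D lP' (word n lQ')) 0 with hV | hV
          · rw [hV, smul_zero, smul_zero]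
          · have hperm : lperm n lP' * lperm n lQ' = 1 := by
              by_contra hne
              exact hV (((IHe lP' lQ' hP' hQ' rfl).2 hlenP').2.2.1 hne)
            have hc : eps q (pact (lperm n lQ') p) = eps p (pact (lperm n lP') q) := by
              have h1 : pact (lperm n lP') (pact (lperm n lQ') p) = p := by
                rw [← pact_mul, hperm, pact_one]
              calc eps q (pact (lperm n lQ') p)
                  = eps (pact (lperm n lP') q) (pact (lperm n lP') (pact (lperm n lQ') p)) :=
                    (eps_pact _ _ _).symm
                _ = eps (pact (lperm n lP') q) p := by rw [h1]
                _ = eps p (pact (lperm n lP') q) := eps_comm _ _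
            rw [hc]
      -- (iii) lperm vanishing
      · intro hne
        rw [KP]
        apply Finset.sum_eq_zero
        intro t ht
        have ht' : t < lP.length := Finset.mem_range.mp ht
        rcases eq_or_ne (coef lP q t) 0 with hc | hc
        · rw [hc, zero_smul]
        · rw [(((IHe (lP.eraseIdx t) lQ' (hsub t) hQ' rfl).2 (herase t ht')).2.2.1 ?_),
            smul_zero]
          intro h1
          apply hne
          have hswap := eps_ne_zero_swap hc
          -- hswap : swap of (pact (lperm (drop (t+1))) q) equals swap of (lP.getD t q)
          have hgd : lP.getD t q = lP[t] := List.getD_eq_getElem lP q ht'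
          have hdecomp : lperm n lP =
              lperm n (lP.take t) *
                (Equiv.swap (lP.getD t q).1 (lP.getD t q).2 * lperm n (lP.drop (t+1))) := by
            conv_lhs => rw [← List.take_append_drop t lP]
            rw [lperm_append, List.drop_eq_getElem_cons ht', lperm_cons, hgd]
          have hdecomp2 : lperm n (lP.eraseIdx t) =
              lperm n (lP.take t) * lperm n (lP.drop (t+1)) := by
            rw [List.eraseIdx_eq_take_drop_succ, lperm_append]
          have hB : Equiv.swap (lP.getD t q).1 (lP.getD t q).2 =
              lperm n (lP.drop (t+1)) * Equiv.swap q.1 q.2 * (lperm n (lP.drop (t+1)))⁻¹ := by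
            rw [← hswap]
            exact Equiv.swap_apply_apply (lperm n (lP.drop (t+1))) q.1 q.2
          rw [hdecomp2] at h1
          rw [hdecomp, lperm_cons, hB]
          calc lperm n (lP.take t) *
                (lperm n (lP.drop (t+1)) * Equiv.swap q.1 q.2 * (lperm n (lP.drop (t+1)))⁻¹ *
                  lperm n (lP.drop (t+1))) * (Equiv.swap q.1 q.2 * lperm n lQ')
              = lperm n (lP.take t) * lperm n (lP.drop (t+1)) * lperm n lQ' := by
                simp only [mul_assoc, inv_mul_cancel_left]
                simp only [← mul_assoc]
                rw [mul_assoc _ (Equiv.swap q.1 q.2) (Equiv.swap q.1 q.2), Equiv.swap_mul_self,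
                  mul_one]
            _ = 1 := h1
      -- (iv) scalar
      · rw [KP]
        apply Submodule.sum_mem
        intro t ht
        exact Submodule.smul_mem _ _
          (((IHe (lP.eraseIdx t) lQ' (hsub t) hQ' rfl).2
            (herase t (Finset.mem_range.mp ht))).2.2.2)

end Setup
/-- given families `D_{ab}` and `N_{ab}` satisfying the stated axioms
(the twisted Leibniz rule for `D` and the dual rule for `N` on products of generators),
for any two products of generators `P`, `Q` of the same length one has
`Δ_P(Q) = Δ_Q(P) = (P)∇_Q = (Q)∇_P`, and this common value is a scalar multiple of `1`.
Here, for `P = x_{i₁j₁}⋯x_{i_dj_d}`, `Δ_P = D_{i₁j₁}∘⋯∘D_{i_dj_d}` and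
`∇_P = N_{i_dj_d}∘⋯∘N_{i₁j₁}`. -/
theorem stmt2 (n : ℕ) (hn : 1 ≤ n)
    (σ : Fin n → Fin n → (E n →ₐ[ℚ] E n))
    (hσ : ∀ a b i j : Fin n,
      σ a b (x n i j) = x n (Equiv.swap a b i) (Equiv.swap a b j))
    (D N : Fin n → Fin n → Module.End ℚ (E n))
    (hDanti : ∀ a b : Fin n, a ≠ b → D b a = -D a b)
    (hNanti : ∀ a b : Fin n, a ≠ b → N b a = -N a b)
    (hD1 : ∀ a b : Fin n, a ≠ b → D a b 1 = 0)
    (hN1 : ∀ a b : Fin n, a ≠ b → N a b 1 = 0)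
    (hDgen : ∀ a b i j : Fin n, a ≠ b → i ≠ j →
      D a b (x n i j) = if i = a ∧ j = b then 1 else if i = b ∧ j = a then -1 else 0)
    (hNgen : ∀ a b i j : Fin n, a ≠ b → i ≠ j →
      N a b (x n i j) = if i = a ∧ j = b then 1 else if i = b ∧ j = a then -1 else 0)
    (hDLeib : ∀ a b : Fin n, a ≠ b → ∀ P Q : E n,
      D a b (P * Q) = D a b P * Q + σ a b P * D a b Q)
    (hNLeib : ∀ a b : Fin n, a ≠ b → ∀ lP lQ : List (Fin n × Fin n),
      (∀ p ∈ lP, p.1 ≠ p.2) → (∀ p ∈ lQ, p.1 ≠ p.2) →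
      N a b (word n lP * word n lQ) =
        word n lP * N a b (word n lQ) +
        N (lperm n lQ a) (lperm n lQ b) (word n lP) * word n lQ) :
    ∀ lP lQ : List (Fin n × Fin n),
      (∀ p ∈ lP, p.1 ≠ p.2) → (∀ p ∈ lQ, p.1 ≠ p.2) →
      lP.length = lQ.length →
      opComp n D lP (word n lQ) = opComp n D lQ (word n lP) ∧
      opComp n D lP (word n lQ) = opComp n N lQ.reverse (word n lP) ∧
      opComp n D lP (word n lQ) = opComp n N lP.reverse (word n lQ) ∧
      ∃ c : ℚ, opComp n D lP (word n lQ) = c • (1 : E n) := by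
  intro lP lQ hP hQ hlen
  let S : Setup n := ⟨σ, D, N, hσ, hD1, hN1, hDgen, hNgen, hDLeib, hNLeib⟩
  obtain ⟨c1, c2, _, c4⟩ := (S.main lQ.length lP lQ hP hQ rfl).2 hlen
  obtain ⟨d1, -, -, -⟩ := (S.main lP.length lQ lP hQ hP rfl).2 hlen.symm
  refine ⟨c2, c1, ?_, ?_⟩
  · rw [show opComp n D lP (word n lQ) = opComp n S.D lP (word n lQ) from rfl, c2]
    exact d1
  · obtain ⟨c, hc⟩ := Submodule.mem_span_singleton.mp c4
    exact ⟨c, hc.symm⟩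

end FK
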